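/- The group 1 + P(-1) acts transitively on the affine subspace ∂ + P(-1) by conjugation: for any Q ∈ ∂ + P(-1) there exists S ∈ 1 + P(-1) with S ∂ S^{-1} = Q. -/

import Mathlib

/-- A pseudodifferential operator over `A`: a formal series `Σ_{i ≤ n} a_i ∂^i`,
encoded by its coefficient function `ℤ → A`, with support bounded above. -/
def PDO (A : Type) [Ring A] : Type := {f : ℤ → A // ∃ n : ℤ, ∀ i > n, f i = 0}

variable {A : Type} [Ring A]

/-- The zero pseudodifferential operator. -/
def pdoZero (A : Type) [Ring A] : PDO A := ⟨fun _ => 0, ⟨0, fun _ _ => rfl⟩⟩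

/-- The identity pseudodifferential operator `1·∂^0`. -/
def pdoOne (A : Type) [Ring A] : PDO A :=
  ⟨fun i => if i = 0 then 1 else 0, ⟨0, fun i hi => if_neg (by omega)⟩⟩

/-- The pseudodifferential operator `∂` itself, i.e. `1·∂^1`. -/
def pdoDel (A : Type) [Ring A] : PDO A :=
  ⟨fun i => if i = 1 then 1 else 0, ⟨1, fun i hi => if_neg (by omega)⟩⟩

/-- A constant-symbol pdo `a·∂^0`. -/
def pdoConst (a : A) : PDO A :=
  ⟨fun i => if i = 0 then a else 0, ⟨0, fun i hi => if_neg (by omega)⟩⟩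

/-- Pointwise addition of pseudodifferential operators. -/
def pdoAdd (P Q : PDO A) : PDO A :=
  ⟨fun i => P.1 i + Q.1 i,
   ⟨max P.2.choose Q.2.choose, fun i hi => by
      dsimp only
      rw [P.2.choose_spec i (lt_of_le_of_lt (le_max_left _ _) hi),
          Q.2.choose_spec i (lt_of_le_of_lt (le_max_right _ _) hi), add_zero]⟩⟩

/-- Pointwise negation. -/
def pdoNeg (P : PDO A) : PDO A :=
  ⟨fun i => -(P.1 i), ⟨P.2.choose, fun i hi => by dsimp only; rw [P.2.choose_spec i hi, neg_zero]⟩⟩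

/-- The generalized Leibniz product of pseudodifferential operators
`(Σ_{i≤n} a_i ∂^i)(Σ_{j≤m} b_j ∂^j) = Σ_{i,j} Σ_{k≥0} binom(i,k) a_i (∂^k b_j) ∂^{i+j-k}`,
where `binom(i,k)` is the generalized binomial coefficient (`Ring.choose` on `ℤ`)
and `d` plays the role of the derivation `∂` of `A`. -/
noncomputable def pdoMul (d : A → A) (P Q : PDO A) : PDO A :=
  ⟨fun N => ∑ i ∈ Finset.Icc (N - Q.2.choose) P.2.choose,
      ∑ j ∈ Finset.Icc (N - i) Q.2.choose,
        (Ring.choose i (i + j - N).toNat : ℤ) • (P.1 i * d^[(i + j - N).toNat] (Q.1 j)),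
   ⟨P.2.choose + Q.2.choose, fun N hN => by
      dsimp only
      rw [Finset.Icc_eq_empty (by omega), Finset.sum_empty]⟩⟩

/-- `P` has order `≤ n` : all coefficients above `n` vanish. -/
def pdoOrderLE (P : PDO A) (n : ℤ) : Prop := ∀ i > n, P.1 i = 0

/-- `P` belongs to `1 + P(-1)`. -/
def pdoInOnePlus {A : Type} [Ring A] (P : PDO A) : Prop :=
  P.1 0 = 1 ∧ ∀ i > (0 : ℤ), P.1 i = 0

/-- `Q` belongs to `∂ + P(-1)`. -/
def pdoInDelPlus {A : Type} [Ring A] (Q : PDO A) : Prop :=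
  Q.1 1 = 1 ∧ Q.1 0 = 0 ∧ ∀ i > (1 : ℤ), Q.1 i = 0


open Finset

section Der
variable {A : Type} [CommRing A] (d : A → A)

theorem der_zero (hadd : ∀ a b : A, d (a + b) = d a + d b) : d 0 = 0 := by
  have h := hadd 0 0
  rw [add_zero] at h
  exact (left_eq_add.mp h)

theorem der_one (hleib : ∀ a b : A, d (a * b) = a * d b + d a * b) : d 1 = 0 := by
  have h := hleib 1 1
  simp only [mul_one, one_mul] at h
  exact (right_eq_add.mp h)

theorem d_zsmul (hadd : ∀ a b : A, d (a + b) = d a + d b) (c : ℤ) (x : A) :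
    d (c • x) = c • d x := by
  have h := map_zsmul (AddMonoidHom.mk' d hadd) c x
  simpa using h

theorem d_sum (hadd : ∀ a b : A, d (a + b) = d a + d b) {ι : Type*}
    (s : Finset ι) (F : ι → A) : d (∑ i ∈ s, F i) = ∑ i ∈ s, d (F i) := by
  exact map_sum (AddMonoidHom.mk' d hadd) F s

theorem iter_zero (hadd : ∀ a b : A, d (a + b) = d a + d b) (n : ℕ) : d^[n] 0 = 0 :=
  Function.iterate_fixed (der_zero d hadd) n

theorem iter_add (hadd : ∀ a b : A, d (a + b) = d a + d b) (n : ℕ) (x y : A) :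
    d^[n] (x + y) = d^[n] x + d^[n] y := by
  induction n generalizing x y with
  | zero => simp
  | succ n ih => simp only [Function.iterate_succ_apply, hadd, ih]

/-- bundled iterate -/
def derIt (hadd : ∀ a b : A, d (a + b) = d a + d b) (n : ℕ) : A →+ A :=
  AddMonoidHom.mk' (d^[n]) (iter_add d hadd n)

theorem iter_zsmul (hadd : ∀ a b : A, d (a + b) = d a + d b) (n : ℕ) (c : ℤ) (x : A) :
    d^[n] (c • x) = c • d^[n] x := by
  have h := map_zsmul (derIt d hadd n) c x
  simpa [derIt] using h

theorem iter_sum (hadd : ∀ a b : A, d (a + b) = d a + d b) (n : ℕ) {ι : Type*}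
    (s : Finset ι) (F : ι → A) : d^[n] (∑ i ∈ s, F i) = ∑ i ∈ s, d^[n] (F i) := by
  exact map_sum (derIt d hadd n) F s

theorem iter_one (hadd : ∀ a b : A, d (a + b) = d a + d b)
    (hleib : ∀ a b : A, d (a * b) = a * d b + d a * b) (n : ℕ) (hn : n ≠ 0) :
    d^[n] 1 = 0 := by
  obtain ⟨m, rfl⟩ := Nat.exists_eq_succ_of_ne_zero hn
  rw [Function.iterate_succ_apply, der_one d hleib, iter_zero d hadd]

theorem iter_leibniz (hadd : ∀ a b : A, d (a + b) = d a + d b)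
    (hleib : ∀ a b : A, d (a * b) = a * d b + d a * b) (n : ℕ) (x y : A) :
    d^[n] (x * y) = ∑ p ∈ range (n + 1), ((n.choose p : ℤ)) • (d^[p] x * d^[n - p] y) := by
  induction n with
  | zero => simp
  | succ n ih =>
    have hd : ∀ z : A, d^[n+1] z = d (d^[n] z) := fun z => Function.iterate_succ_apply' d n z
    rw [hd, ih, d_sum d hadd]
    have step : ∀ p, d ((n.choose p : ℤ) • (d^[p] x * d^[n - p] y))
        = (n.choose p : ℤ) • (d^[p] x * d^[n - p + 1] y)
          + (n.choose p : ℤ) • (d^[p + 1] x * d^[n - p] y) := by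
      intro p
      rw [d_zsmul d hadd, hleib, smul_add,
        show d^[n-p+1] y = d (d^[n-p] y) from Function.iterate_succ_apply' d (n-p) y,
        show d^[p+1] x = d (d^[p] x) from Function.iterate_succ_apply' d p x]
    rw [Finset.sum_congr rfl fun p _ => step p, Finset.sum_add_distrib]
    have hT1 : ∀ p ∈ range (n+1), (n.choose p : ℤ) • (d^[p] x * d^[n - p + 1] y)
        = (n.choose p : ℤ) • (d^[p] x * d^[n + 1 - p] y) := by
      intro p hp
      rw [mem_range] at hp
      have e : n - p + 1 = n + 1 - p := by omega
      rw [e]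
    rw [Finset.sum_congr rfl hT1]
    rw [Finset.sum_range_succ' (fun p => (((n+1).choose p : ℕ) : ℤ) • (d^[p] x * d^[n + 1 - p] y)) (n+1)]
    have pascal : ∀ p ∈ range (n+1), (((n+1).choose (p+1) : ℕ) : ℤ) • (d^[p+1] x * d^[n + 1 - (p+1)] y)
        = (n.choose p : ℤ) • (d^[p+1] x * d^[n - p] y)
          + (n.choose (p+1) : ℤ) • (d^[p+1] x * d^[n - p] y) := by
      intro p hp
      rw [Nat.add_sub_add_right, ← add_smul, Nat.choose_succ_succ, Nat.cast_add]
    rw [Finset.sum_congr rfl pascal, Finset.sum_add_distrib]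
    have last : ∑ p ∈ range (n+1), (n.choose (p+1) : ℤ) • (d^[p+1] x * d^[n - p] y)
        + (((n+1).choose 0 : ℕ) : ℤ) • (d^[0] x * d^[n + 1 - 0] y)
        = ∑ p ∈ range (n+1), (n.choose p : ℤ) • (d^[p] x * d^[n + 1 - p] y) := by
      rw [show (((n+1).choose 0 : ℕ) : ℤ) • (d^[0] x * d^[n + 1 - 0] y)
          = (n.choose 0 : ℤ) • (d^[0] x * d^[n + 1 - 0] y) by norm_num]
      have h2 : ∀ p ∈ range (n+1), (n.choose (p+1) : ℤ) • (d^[p+1] x * d^[n - p] y)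
          = (n.choose (p+1) : ℤ) • (d^[p+1] x * d^[n + 1 - (p+1)] y) := by
        intro p hp; rw [Nat.add_sub_add_right]
      rw [Finset.sum_congr rfl h2,
        ← Finset.sum_range_succ' (fun p => (n.choose p : ℤ) • (d^[p] x * d^[n + 1 - p] y)) (n+1),
        Finset.sum_range_succ]
      simp
    rw [add_assoc, last]
    exact add_comm _ _

end Der
theorem key_choose (i j : ℤ) (t p : ℕ) (hp : p ≤ t) :
    Ring.choose i p * Ring.choose (i + j - (p : ℤ)) (t - p)
      = ∑ s ∈ range (t - p + 1), Ring.choose i (t - s) * Ring.choose j s * ((t - s).choose p : ℤ) := by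
  have hv := Ring.add_choose_eq (r := j) (s := i - (p : ℤ)) (t - p) (Commute.all _ _)
  rw [Finset.Nat.sum_antidiagonal_eq_sum_range_succ_mk] at hv
  have e0 : i + j - (p : ℤ) = j + (i - p) := by ring
  rw [e0, hv, Finset.mul_sum]
  refine Finset.sum_congr rfl fun s hs => ?_
  rw [mem_range] at hs
  have hps : p ≤ t - s := by omega
  have hc := Ring.choose_smul_choose i hps
  rw [nsmul_eq_mul] at hc
  have e : t - s - p = t - p - s := by omega
  rw [e] at hc
  show Ring.choose i (p : ℕ) * (Ring.choose j s * Ring.choose (i - (p : ℤ)) (t - p - s))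
      = Ring.choose i (t - s) * Ring.choose j s * ((t - s).choose p : ℤ)
  linear_combination -(Ring.choose j s) * hc

section CM
variable {A : Type} [CommRing A] (d : A → A)

/-- the coefficient of a product, with explicit bounds -/
noncomputable def cm (f g : ℤ → A) (a b N : ℤ) : A :=
  ∑ i ∈ Finset.Icc (N - b) a, ∑ j ∈ Finset.Icc (N - i) b,
    (Ring.choose i (i + j - N).toNat : ℤ) • (f i * d^[(i + j - N).toNat] (g j))

theorem cm_pdo (P Q : PDO A) (N : ℤ) :
    (pdoMul d P Q).1 N = cm d P.1 Q.1 P.2.choose Q.2.choose N := rfl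

theorem cm_mono (hd0 : d 0 = 0) {f g : ℤ → A} {a b a' b' : ℤ}
    (hf : ∀ i > a, f i = 0) (hg : ∀ j > b, g j = 0) (ha : a ≤ a') (hb : b ≤ b') (N : ℤ) :
    cm d f g a b N = cm d f g a' b' N := by
  have iterzero : ∀ k : ℕ, d^[k] (0 : A) = 0 := fun k => Function.iterate_fixed hd0 k
  unfold cm
  have hinner : ∀ i : ℤ,
      (∑ j ∈ Finset.Icc (N - i) b, (Ring.choose i (i + j - N).toNat : ℤ) • (f i * d^[(i + j - N).toNat] (g j)))
      = ∑ j ∈ Finset.Icc (N - i) b', (Ring.choose i (i + j - N).toNat : ℤ) • (f i * d^[(i + j - N).toNat] (g j)) := by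
    intro i
    apply Finset.sum_subset (Finset.Icc_subset_Icc le_rfl hb)
    intro j hj hj'
    simp only [mem_Icc] at hj hj'
    rw [hg j (by omega), iterzero, mul_zero, smul_zero]
  rw [Finset.sum_congr rfl (fun i _ => hinner i)]
  apply Finset.sum_subset (Finset.Icc_subset_Icc (by omega) ha)
  intro i hi hi'
  simp only [mem_Icc] at hi hi'
  by_cases hia : a < i
  · apply Finset.sum_eq_zero; intro j hj; rw [hf i hia, zero_mul, smul_zero]
  · apply Finset.sum_eq_zero; intro j hj
    simp only [mem_Icc] at hj
    rw [hg j (by omega), iterzero, mul_zero, smul_zero]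

theorem cm_congr (hd0 : d 0 = 0) {f g : ℤ → A} {a b a' b' : ℤ}
    (hf : ∀ i > a, f i = 0) (hg : ∀ j > b, g j = 0)
    (hf' : ∀ i > a', f i = 0) (hg' : ∀ j > b', g j = 0) (N : ℤ) :
    cm d f g a b N = cm d f g a' b' N := by
  rw [cm_mono d hd0 hf hg (le_max_left a a') (le_max_left b b') N,
    cm_mono d hd0 hf' hg' (le_max_right a a') (le_max_right b b') N]

theorem cm_vanish {f g : ℤ → A} {a b : ℤ} (N : ℤ) (hN : N > a + b) :
    cm d f g a b N = 0 := by
  unfold cm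
  apply Finset.sum_eq_zero
  intro i hi
  simp only [mem_Icc] at hi
  rw [Finset.Icc_eq_empty (by omega), Finset.sum_empty]

end CM
section SP
variable {A : Type} [CommRing A] (d : A → A)
variable (hadd : ∀ a b : A, d (a + b) = d a + d b)
variable (hleib : ∀ a b : A, d (a * b) = a * d b + d a * b)
include hadd hleib

theorem cm_one_right {f : ℤ → A} {a : ℤ} (hf : ∀ i > a, f i = 0) (N : ℤ) :
    cm d f (pdoOne A).1 a 0 N = f N := by
  have h1 : ∀ j : ℤ, (pdoOne A).1 j = if j = 0 then 1 else 0 := fun _ => rfl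
  have hit0 : ∀ k : ℕ, d^[k] (0 : A) = 0 := iter_zero d hadd
  by_cases hNa : N ≤ a
  · unfold cm
    rw [Finset.sum_eq_single_of_mem N (by simp only [mem_Icc]; omega)]
    · rw [show N - N = (0 : ℤ) by ring, Finset.Icc_self, Finset.sum_singleton,
        show (N + 0 - N).toNat = 0 by omega, Ring.choose_zero_right, one_smul, h1]
      simp
    · intro i hi hiN
      simp only [mem_Icc] at hi
      apply Finset.sum_eq_zero
      intro j hj
      simp only [mem_Icc] at hj
      rcases eq_or_ne j 0 with rfl | hj0
      · rw [h1, if_pos rfl, iter_one d hadd hleib _ (by omega), mul_zero, smul_zero]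
      · rw [h1, if_neg hj0, hit0, mul_zero, smul_zero]
  · unfold cm
    rw [hf N (by omega), Finset.Icc_eq_empty (by omega), Finset.sum_empty]

theorem cm_one_left {g : ℤ → A} {b : ℤ} (hg : ∀ j > b, g j = 0) (N : ℤ) :
    cm d (pdoOne A).1 g 0 b N = g N := by
  have h1 : ∀ j : ℤ, (pdoOne A).1 j = if j = 0 then 1 else 0 := fun _ => rfl
  by_cases hNb : N ≤ b
  · unfold cm
    rw [Finset.sum_eq_single_of_mem 0 (by simp only [mem_Icc]; omega)]
    · rw [Finset.sum_eq_single_of_mem N (by simp only [mem_Icc]; omega)]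
      · rw [show (0 + N - N).toNat = 0 by omega, Ring.choose_zero_right, one_smul, h1,
          if_pos rfl, one_mul, Function.iterate_zero_apply]
      · intro j hj hjN
        simp only [mem_Icc] at hj
        rw [show (0 + j - N).toNat = ((0 + j - N).toNat - 1) + 1 by omega,
          Ring.choose_zero_succ, zero_smul]
    · intro i hi hi0
      apply Finset.sum_eq_zero
      intro j hj
      rw [h1, if_neg hi0, zero_mul, smul_zero]
  · unfold cm
    rw [hg N (by omega)]
    apply Finset.sum_eq_zero
    intro i hi
    simp only [mem_Icc] at hi
    rw [Finset.Icc_eq_empty (by omega), Finset.sum_empty]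

theorem cm_del_right {f : ℤ → A} {a : ℤ} (hf : ∀ i > a, f i = 0) (N : ℤ) :
    cm d f (pdoDel A).1 a 1 N = f (N - 1) := by
  have h1 : ∀ j : ℤ, (pdoDel A).1 j = if j = 1 then 1 else 0 := fun _ => rfl
  have hit0 : ∀ k : ℕ, d^[k] (0 : A) = 0 := iter_zero d hadd
  by_cases hNa : N - 1 ≤ a
  · unfold cm
    rw [Finset.sum_eq_single_of_mem (N - 1) (by simp only [mem_Icc]; omega)]
    · rw [show N - (N - 1) = (1 : ℤ) by ring, Finset.Icc_self, Finset.sum_singleton,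
        show (N - 1 + 1 - N).toNat = 0 by omega, Ring.choose_zero_right, one_smul, h1]
      simp
    · intro i hi hiN
      simp only [mem_Icc] at hi
      apply Finset.sum_eq_zero
      intro j hj
      simp only [mem_Icc] at hj
      rcases eq_or_ne j 1 with rfl | hj1
      · rw [h1, if_pos rfl, iter_one d hadd hleib _ (by omega), mul_zero, smul_zero]
      · rw [h1, if_neg hj1, hit0, mul_zero, smul_zero]
  · unfold cm
    rw [hf (N - 1) (by omega), Finset.Icc_eq_empty (by omega), Finset.sum_empty]

end SP
section ASSOC
variable {A : Type} [CommRing A] (d : A → A)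

/-- canonical triple-product coefficient -/
noncomputable def cm3 (f g h : ℤ → A) (a b c N : ℤ) : A :=
  ∑ i ∈ Finset.Icc (N - b - c) a, ∑ j ∈ Finset.Icc (N - c - i) b,
    ∑ w ∈ Finset.Icc (N - i - j) c, ∑ k ∈ Finset.range ((i + j + w - N).toNat + 1),
      (Ring.choose (i + j - (k : ℤ)) ((i + j + w - N).toNat - k) * Ring.choose i k) •
        (f i * d^[k] (g j) * d^[(i + j + w - N).toNat - k] (h w))

theorem assoc_left (f g h : ℤ → A) (a b c N : ℤ) :
    cm d (fun x => cm d f g a b x) h (a + b) c N = cm3 d f g h a b c N := by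
  unfold cm cm3
  simp only [Finset.sum_mul, Finset.smul_sum, smul_mul_assoc, smul_smul, Finset.sum_sigma']
  refine Finset.sum_nbij' (fun p => ⟨p.2.2.1, p.2.2.2, p.2.1, (p.2.2.1 + p.2.2.2 - p.1).toNat⟩)
    (fun p => ⟨p.1 + p.2.1 - (p.2.2.2 : ℤ), p.2.2.1, p.1, p.2.1⟩) ?_ ?_ ?_ ?_ ?_
  · rintro ⟨x, w, i, j⟩ hp
    simp only [Finset.mem_sigma, Finset.mem_Icc, Finset.mem_range] at hp ⊢
    omega
  · rintro ⟨i, j, w, k⟩ hp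
    simp only [Finset.mem_sigma, Finset.mem_Icc, Finset.mem_range] at hp ⊢
    omega
  · rintro ⟨x, w, i, j⟩ hp
    simp only [Finset.mem_sigma, Finset.mem_Icc, Finset.mem_range] at hp
    have e : i + j - ((i + j - x).toNat : ℤ) = x := by omega
    simp only [e]
  · rintro ⟨i, j, w, k⟩ hp
    simp only [Finset.mem_sigma, Finset.mem_Icc, Finset.mem_range] at hp
    have e : (i + j - (i + j - (k : ℤ))).toNat = k := by omega
    simp only [e]
  · rintro ⟨x, w, i, j⟩ hp
    simp only [Finset.mem_sigma, Finset.mem_Icc, Finset.mem_range] at hp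
    have e1 : ((i + j - x).toNat : ℤ) = i + j - x := by omega
    have e2 : (x + w - N).toNat = (i + j + w - N).toNat - (i + j - x).toNat := by omega
    simp only [e1, e2]
    have e3 : i + j - (i + j - x) = x := by ring
    rw [e3]

end ASSOC
section ASSOC2
variable {A : Type} [CommRing A] (d : A → A)

theorem inner_swap {A : Type} [CommRing A] (i j : ℤ) (t : ℕ) (B : ℕ → A) :
    ∑ s ∈ range (t + 1), ∑ p ∈ range ((t - s) + 1),
      (Ring.choose i (t - s) * (Ring.choose j s * ((t - s).choose p : ℤ))) • B p
    = ∑ k ∈ range (t + 1), (Ring.choose (i + j - (k : ℤ)) (t - k) * Ring.choose i k) • B k := by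
  have ext1 : ∀ s ∈ range (t + 1),
      ∑ p ∈ range ((t - s) + 1),
        (Ring.choose i (t - s) * (Ring.choose j s * ((t - s).choose p : ℤ))) • B p
      = ∑ p ∈ range (t + 1),
        (Ring.choose i (t - s) * (Ring.choose j s * ((t - s).choose p : ℤ))) • B p := by
    intro s hs
    apply Finset.sum_subset (Finset.range_subset_range.mpr (by omega))
    intro p hp hp'
    simp only [mem_range] at hp hp'
    rw [Nat.choose_eq_zero_of_lt (by omega), Nat.cast_zero, mul_zero, mul_zero, zero_smul]
  rw [Finset.sum_congr rfl ext1, Finset.sum_comm]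
  apply Finset.sum_congr rfl
  intro p hp
  simp only [mem_range] at hp
  rw [← Finset.sum_subset (Finset.range_subset_range.mpr (show t - p + 1 ≤ t + 1 by omega))
    (fun s hs hs' => by
      simp only [mem_range] at hs hs'
      rw [Nat.choose_eq_zero_of_lt (by omega), Nat.cast_zero, mul_zero, mul_zero, zero_smul])]
  rw [← Finset.sum_smul]
  congr 1
  have hk := key_choose i j t p (by omega)
  calc ∑ s ∈ range (t - p + 1),
        Ring.choose i (t - s) * (Ring.choose j s * ((t - s).choose p : ℤ))
      = ∑ s ∈ range (t - p + 1),
        Ring.choose i (t - s) * Ring.choose j s * ((t - s).choose p : ℤ) := by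
        apply Finset.sum_congr rfl; intros; ring
    _ = Ring.choose i p * Ring.choose (i + j - (p : ℤ)) (t - p) := hk.symm
    _ = Ring.choose (i + j - (p : ℤ)) (t - p) * Ring.choose i p := by ring

theorem assoc_right (hadd : ∀ a b : A, d (a + b) = d a + d b)
    (hleib : ∀ a b : A, d (a * b) = a * d b + d a * b) (f g h : ℤ → A) (a b c N : ℤ) :
    cm d f (fun y => cm d g h b c y) a (b + c) N = cm3 d f g h a b c N := by
  have step2 :
      (∑ i ∈ Finset.Icc (N - b - c) a, ∑ j ∈ Finset.Icc (N - c - i) b,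
        ∑ w ∈ Finset.Icc (N - i - j) c,
          ∑ s ∈ Finset.range ((i + j + w - N).toNat + 1),
            ∑ p ∈ Finset.range (((i + j + w - N).toNat - s) + 1),
              (Ring.choose i ((i + j + w - N).toNat - s) *
                (Ring.choose j s * (((i + j + w - N).toNat - s).choose p : ℤ))) •
                (f i * (d^[p] (g j) * d^[(i + j + w - N).toNat - p] (h w))))
      = cm3 d f g h a b c N := by
    unfold cm3
    apply Finset.sum_congr rfl; intro i _
    apply Finset.sum_congr rfl; intro j _
    apply Finset.sum_congr rfl; intro w _
    rw [inner_swap i j ((i + j + w - N).toNat)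
      (fun k => f i * (d^[k] (g j) * d^[(i + j + w - N).toNat - k] (h w)))]
    apply Finset.sum_congr rfl; intro k _
    rw [mul_assoc]
  rw [← step2]
  unfold cm
  simp only [iter_sum d hadd, iter_zsmul d hadd, iter_leibniz d hadd hleib,
    ← Function.iterate_add_apply]
  simp only [Finset.mul_sum, Finset.smul_sum, mul_smul_comm, smul_smul, Finset.sum_sigma']
  refine Finset.sum_nbij'
    (fun p => ⟨p.1, p.2.2.1, p.2.2.2.1, (p.2.2.1 + p.2.2.2.1 - p.2.1).toNat, p.2.2.2.2⟩)
    (fun p => ⟨p.1, p.2.1 + p.2.2.1 - (p.2.2.2.1 : ℤ), p.2.1, p.2.2.1, p.2.2.2.2⟩) ?_ ?_ ?_ ?_ ?_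
  · rintro ⟨i, y, j, w, p⟩ hp
    simp only [Finset.mem_sigma, Finset.mem_Icc, Finset.mem_range] at hp ⊢
    omega
  · rintro ⟨i, j, w, s, p⟩ hp
    simp only [Finset.mem_sigma, Finset.mem_Icc, Finset.mem_range] at hp ⊢
    omega
  · rintro ⟨i, y, j, w, p⟩ hp
    simp only [Finset.mem_sigma, Finset.mem_Icc, Finset.mem_range] at hp
    have e : j + w - ((j + w - y).toNat : ℤ) = y := by omega
    simp only [e]
  · rintro ⟨i, j, w, s, p⟩ hp
    simp only [Finset.mem_sigma, Finset.mem_Icc, Finset.mem_range] at hp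
    have e : (j + w - (j + w - (s : ℤ))).toNat = s := by omega
    simp only [e]
  · rintro ⟨i, y, j, w, p⟩ hp
    simp only [Finset.mem_sigma, Finset.mem_Icc, Finset.mem_range] at hp
    have e1 : (i + y - N).toNat = (i + j + w - N).toNat - (j + w - y).toNat := by omega
    have e2 : (i + y - N).toNat - p + (j + w - y).toNat = (i + j + w - N).toNat - p := by omega
    rw [e2, e1]

end ASSOC2
section COMPUTE
variable {A : Type} [CommRing A] (d : A → A)

theorem Icc_split_bot {a b : ℤ} (h : a ≤ b) :
    Finset.Icc a b = insert a (Finset.Icc (a + 1) b) := by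
  ext x; simp only [Finset.mem_Icc, Finset.mem_insert]; omega

theorem Icc_split_top {a b : ℤ} (h : a ≤ b) :
    Finset.Icc a b = insert b (Finset.Icc a (b - 1)) := by
  ext x; simp only [Finset.mem_Icc, Finset.mem_insert]; omega

theorem not_mem_bot {a b : ℤ} : a ∉ Finset.Icc (a + 1) b := by
  simp only [Finset.mem_Icc]; omega

theorem not_mem_top {a b : ℤ} : b ∉ Finset.Icc a (b - 1) := by
  simp only [Finset.mem_Icc]; omega

theorem choose_one_big (k : ℕ) (hk : 2 ≤ k) : (Ring.choose (1 : ℤ) k) = 0 := by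
  rw [show (1 : ℤ) = ((1 : ℕ) : ℤ) by norm_num, Ring.choose_natCast,
    Nat.choose_eq_zero_of_lt (by omega)]
  norm_num

theorem compute_left_inv {u s : ℤ → A} (hs0 : s 0 = 1) (hu0 : u 0 = 1)
    (hrec : ∀ N < 0, u N = -∑ i ∈ Finset.Icc (N + 1) 0, ∑ j ∈ Finset.Icc (N - i) 0,
      (Ring.choose i (i + j - N).toNat : ℤ) • (u i * d^[(i + j - N).toNat] (s j)))
    (N : ℤ) : cm d u s 0 0 N = (pdoOne A).1 N := by
  have h1 : (pdoOne A).1 N = if N = 0 then 1 else 0 := rfl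
  unfold cm
  rw [show N - (0 : ℤ) = N by ring]
  rcases lt_trichotomy N 0 with hN | rfl | hN
  · rw [h1, if_neg (by omega), Icc_split_bot (show N ≤ 0 by omega),
      Finset.sum_insert not_mem_bot]
    have e1 : ∑ j ∈ Finset.Icc (N - N) 0,
        (Ring.choose N (N + j - N).toNat : ℤ) • (u N * d^[(N + j - N).toNat] (s j)) = u N := by
      rw [show N - N = (0 : ℤ) by ring, Finset.Icc_self, Finset.sum_singleton,
        show (N + 0 - N).toNat = 0 by omega, Ring.choose_zero_right, one_smul,
        Function.iterate_zero_apply, hs0, mul_one]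
    rw [e1, hrec N hN]
    exact neg_add_cancel _
  · rw [h1, if_pos rfl, Finset.Icc_self, Finset.sum_singleton,
      show (0 : ℤ) - 0 = 0 by ring, Finset.Icc_self, Finset.sum_singleton,
      show ((0 : ℤ) + 0 - 0).toNat = 0 by omega, Ring.choose_zero_right, one_smul,
      Function.iterate_zero_apply, hs0, hu0, mul_one]
  · rw [h1, if_neg (by omega), Finset.Icc_eq_empty (by omega), Finset.sum_empty]

theorem compute_right_inv {s t : ℤ → A} (hs0 : s 0 = 1) (ht0 : t 0 = 1)
    (hrec : ∀ N < 0, t N = -∑ j ∈ Finset.Icc (N + 1) 0, ∑ i ∈ Finset.Icc (N - j) 0,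
      (Ring.choose i (i + j - N).toNat : ℤ) • (s i * d^[(i + j - N).toNat] (t j)))
    (N : ℤ) : cm d s t 0 0 N = (pdoOne A).1 N := by
  have h1 : (pdoOne A).1 N = if N = 0 then 1 else 0 := rfl
  unfold cm
  rw [show N - (0 : ℤ) = N by ring]
  rcases lt_trichotomy N 0 with hN | rfl | hN
  · rw [h1, if_neg (by omega)]
    rw [Finset.sum_comm' (s' := fun j => Finset.Icc (N - j) 0) (t' := Finset.Icc N 0)
      (by intro i j; simp only [Finset.mem_Icc]; omega)]
    rw [Icc_split_bot (show N ≤ 0 by omega), Finset.sum_insert not_mem_bot]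
    have e1 : ∑ i ∈ Finset.Icc (N - N) 0,
        (Ring.choose i (i + N - N).toNat : ℤ) • (s i * d^[(i + N - N).toNat] (t N)) = t N := by
      rw [show N - N = (0 : ℤ) by ring, Finset.Icc_self, Finset.sum_singleton,
        show ((0 : ℤ) + N - N).toNat = 0 by omega, Ring.choose_zero_right, one_smul,
        Function.iterate_zero_apply, hs0, one_mul]
    rw [e1, hrec N hN]
    exact neg_add_cancel _
  · rw [h1, if_pos rfl, Finset.Icc_self, Finset.sum_singleton,
      show (0 : ℤ) - 0 = 0 by ring, Finset.Icc_self, Finset.sum_singleton,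
      show ((0 : ℤ) + 0 - 0).toNat = 0 by omega, Ring.choose_zero_right, one_smul,
      Function.iterate_zero_apply, hs0, ht0, mul_one]
  · rw [h1, if_neg (by omega), Finset.Icc_eq_empty (by omega), Finset.sum_empty]

theorem compute_conj (hadd : ∀ a b : A, d (a + b) = d a + d b)
    (hleib : ∀ a b : A, d (a * b) = a * d b + d a * b) {q s : ℤ → A}
    (hq1 : q 1 = 1) (hq0 : q 0 = 0) (hs0 : s 0 = 1) (hsv : ∀ i > (0 : ℤ), s i = 0)
    (hds : ∀ N < 0, d (s N) = -∑ i ∈ Finset.Icc (N + 1) 0, ∑ j ∈ Finset.Icc (N - i) (-1),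
      (Ring.choose j (j + i - N).toNat : ℤ) • (q j * d^[(j + i - N).toNat] (s i)))
    (N : ℤ) : cm d q s 1 0 N = s (N - 1) := by
  unfold cm
  rw [show N - (0 : ℤ) = N by ring]
  rcases lt_trichotomy N 1 with hN | rfl | hN
  · -- N ≤ 0
    have hN0 : N ≤ 0 := by omega
    rw [Icc_split_top (show N ≤ 1 by omega), Finset.sum_insert (by simp only [Finset.mem_Icc]; omega),
      show (1 : ℤ) - 1 = 0 by ring, Icc_split_top hN0,
      Finset.sum_insert (by simp only [Finset.mem_Icc]; omega), show (0 : ℤ) - 1 = -1 by ring]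
    -- i = 1 piece
    have e1 : ∑ j ∈ Finset.Icc (N - 1) 0,
        (Ring.choose 1 ((1 : ℤ) + j - N).toNat : ℤ) • (q 1 * d^[((1 : ℤ) + j - N).toNat] (s j))
        = s (N - 1) + d (s N) := by
      rw [show N - 1 = (N - 1) by ring, Icc_split_bot (show N - 1 ≤ 0 by omega),
        Finset.sum_insert not_mem_bot, show N - 1 + 1 = N by ring,
        Icc_split_bot hN0, Finset.sum_insert not_mem_bot]
      have t1 : (Ring.choose 1 ((1 : ℤ) + (N - 1) - N).toNat : ℤ) •
          (q 1 * d^[((1 : ℤ) + (N - 1) - N).toNat] (s (N - 1))) = s (N - 1) := by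
        rw [show ((1 : ℤ) + (N - 1) - N).toNat = 0 by omega, Ring.choose_zero_right, one_smul,
          Function.iterate_zero_apply, hq1, one_mul]
      have t2 : (Ring.choose 1 ((1 : ℤ) + N - N).toNat : ℤ) •
          (q 1 * d^[((1 : ℤ) + N - N).toNat] (s N)) = d (s N) := by
        rw [show ((1 : ℤ) + N - N).toNat = 1 by omega, Ring.choose_one_right, one_smul,
          Function.iterate_one, hq1, one_mul]
      have t3 : ∑ j ∈ Finset.Icc (N + 1) 0,
          (Ring.choose 1 ((1 : ℤ) + j - N).toNat : ℤ) • (q 1 * d^[((1 : ℤ) + j - N).toNat] (s j)) = 0 := by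
        apply Finset.sum_eq_zero
        intro j hj
        simp only [Finset.mem_Icc] at hj
        rw [choose_one_big _ (by omega), zero_smul]
      rw [t1, t2, t3, add_zero]
    -- i = 0 piece
    have e0 : ∑ j ∈ Finset.Icc (N - 0) 0,
        (Ring.choose 0 ((0 : ℤ) + j - N).toNat : ℤ) • (q 0 * d^[((0 : ℤ) + j - N).toNat] (s j)) = 0 := by
      apply Finset.sum_eq_zero
      intro j hj
      rw [hq0, zero_mul, smul_zero]
    rw [e1, e0]
    -- remaining: W over i ∈ Icc N (-1)
    rcases eq_or_lt_of_le hN0 with rfl | hNneg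
    · rw [Finset.Icc_eq_empty (by omega), Finset.sum_empty, hs0, der_one d hleib]
      ring
    · have hW : ∑ i ∈ Finset.Icc N (-1), ∑ j ∈ Finset.Icc (N - i) 0,
          (Ring.choose i (i + j - N).toNat : ℤ) • (q i * d^[(i + j - N).toNat] (s j))
          = -d (s N) := by
        rw [Finset.sum_comm' (s' := fun j => Finset.Icc (N - j) (-1)) (t' := Finset.Icc (N + 1) 0)
          (by intro i j; simp only [Finset.mem_Icc]; omega)]
        rw [hds N hNneg, neg_neg]
      rw [hW]
      ring
  · -- N = 1
    rw [Finset.Icc_self, Finset.sum_singleton, show (1 : ℤ) - 1 = 0 by ring,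
      Finset.Icc_self, Finset.sum_singleton,
      show ((1 : ℤ) + 0 - 1).toNat = 0 by omega, Ring.choose_zero_right, one_smul,
      Function.iterate_zero_apply, hq1, hs0, mul_one]
  · -- N ≥ 2
    rw [Finset.Icc_eq_empty (by omega), Finset.sum_empty, hsv (N - 1) (by omega)]

end COMPUTE
section SOLVE
variable {A : Type} [CommRing A]

def solveAux (F : ℤ → (ℤ → A) → A) : ℕ → A
  | 0 => 1
  | (n + 1) => F (-((n : ℤ) + 1))
      (fun i => if h : -((n : ℤ) + 1) < i ∧ i ≤ 0 then solveAux F (-i).toNat else 0)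
  termination_by n => n
  decreasing_by omega

def solveFn (F : ℤ → (ℤ → A) → A) : ℤ → A :=
  fun N => if 0 < N then 0 else solveAux F (-N).toNat

theorem solveFn_zero (F : ℤ → (ℤ → A) → A) : solveFn F 0 = 1 := by
  unfold solveFn
  rw [if_neg (by omega), show ((-0 : ℤ)).toNat = 0 by omega, solveAux]

theorem solveFn_pos (F : ℤ → (ℤ → A) → A) : ∀ N > 0, solveFn F N = 0 := by
  intro N hN; unfold solveFn; rw [if_pos hN]

theorem solveFn_neg (F : ℤ → (ℤ → A) → A)
    (hF : ∀ (N : ℤ) (g g' : ℤ → A), (∀ i, N < i → g i = g' i) → F N g = F N g') :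
    ∀ N < 0, solveFn F N = F N (solveFn F) := by
  intro N hN
  obtain ⟨n, hn⟩ : ∃ n : ℕ, N = -((n : ℤ) + 1) := ⟨((-N).toNat - 1 : ℕ), by omega⟩
  have h1 : solveFn F N = solveAux F (n + 1) := by
    unfold solveFn
    rw [if_neg (by omega)]
    congr 1
    omega
  rw [h1, solveAux]
  rw [show -((n : ℤ) + 1) = N from hn.symm]
  apply hF
  intro i hi
  by_cases h0 : 0 < i
  · rw [dif_neg (by omega)]
    exact (solveFn_pos F i h0).symm
  · rw [dif_pos ⟨by omega, by omega⟩]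
    unfold solveFn
    rw [if_neg h0]

end SOLVE

section PDOLEM
variable {A : Type} [CommRing A] (d : A → A)
variable (hadd : ∀ a b : A, d (a + b) = d a + d b)
variable (hleib : ∀ a b : A, d (a * b) = a * d b + d a * b)

theorem pdo_ext {P Q : PDO A} (h : ∀ N, P.1 N = Q.1 N) : P = Q := Subtype.ext (funext h)

include hadd in
theorem pdoMul_coeff {P Q : PDO A} {a b : ℤ}
    (hP : ∀ i > a, P.1 i = 0) (hQ : ∀ j > b, Q.1 j = 0) (N : ℤ) :
    (pdoMul d P Q).1 N = cm d P.1 Q.1 a b N := by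
  rw [cm_pdo]
  exact cm_congr d (der_zero d hadd) P.2.choose_spec Q.2.choose_spec hP hQ N

include hadd in
theorem pdoMul_vanish {P Q : PDO A} {a b : ℤ}
    (hP : ∀ i > a, P.1 i = 0) (hQ : ∀ j > b, Q.1 j = 0) :
    ∀ N > a + b, (pdoMul d P Q).1 N = 0 := by
  intro N hN
  rw [pdoMul_coeff d hadd hP hQ N]
  exact cm_vanish d N hN

theorem pdoOne_vanish : ∀ j > (0 : ℤ), (pdoOne A).1 j = 0 := fun j hj => if_neg (by omega)

theorem pdoDel_vanish : ∀ j > (1 : ℤ), (pdoDel A).1 j = 0 := fun j hj => if_neg (by omega)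

include hadd hleib in
theorem pdo_assoc (P Q R : PDO A) :
    pdoMul d (pdoMul d P Q) R = pdoMul d P (pdoMul d Q R) := by
  apply pdo_ext
  intro N
  rw [pdoMul_coeff d hadd
    (pdoMul_vanish d hadd P.2.choose_spec Q.2.choose_spec) R.2.choose_spec N]
  rw [pdoMul_coeff d hadd P.2.choose_spec
    (pdoMul_vanish d hadd Q.2.choose_spec R.2.choose_spec) N]
  rw [show (pdoMul d P Q).1 = fun x => cm d P.1 Q.1 P.2.choose Q.2.choose x from rfl]
  rw [show (pdoMul d Q R).1 = fun y => cm d Q.1 R.1 Q.2.choose R.2.choose y from rfl]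
  rw [assoc_left d P.1 Q.1 R.1 P.2.choose Q.2.choose R.2.choose N,
    assoc_right d hadd hleib P.1 Q.1 R.1 P.2.choose Q.2.choose R.2.choose N]

include hadd hleib in
theorem pdoMul_one (P : PDO A) : pdoMul d P (pdoOne A) = P := by
  apply pdo_ext
  intro N
  rw [pdoMul_coeff d hadd P.2.choose_spec (pdoOne_vanish) N,
    cm_one_right d hadd hleib P.2.choose_spec N]

include hadd hleib in
theorem pdoOne_mul (P : PDO A) : pdoMul d (pdoOne A) P = P := by
  apply pdo_ext
  intro N
  rw [pdoMul_coeff d hadd (pdoOne_vanish) P.2.choose_spec N,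
    cm_one_left d hadd hleib P.2.choose_spec N]

end PDOLEM

/-- the group `1 + P(-1)` acts transitively on `∂ + P(-1)` by conjugation:
for any `Q ∈ ∂ + P(-1)` there is `S ∈ 1 + P(-1)`, invertible in `1 + P(-1)`, with
`S ∂ S⁻¹ = Q`. Hypotheses: the constants `ker ∂` form a field and `∂` is surjective
(enough antiderivatives). -/
theorem pdo_conjugation_transitive {K : Type} [Field K] [CharZero K]
    {A : Type} [CommRing A] [Algebra K A] (d : A → A)
    (hadd : ∀ a b : A, d (a + b) = d a + d b)
    (hleib : ∀ a b : A, d (a * b) = a * d b + d a * b)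
    (hfield : ∀ a : A, d a = 0 → a ≠ 0 → ∃ b : A, d b = 0 ∧ a * b = 1)
    (hsurj : Function.Surjective d)
    (Q : PDO A) (hQ : pdoInDelPlus Q) :
    ∃ S Sinv : PDO A, pdoInOnePlus S ∧ pdoInOnePlus Sinv ∧
      pdoMul d S Sinv = pdoOne A ∧ pdoMul d Sinv S = pdoOne A ∧
      pdoMul d (pdoMul d S (pdoDel A)) Sinv = Q := by
  classical
  obtain ⟨hQ1, hQ0, hQv⟩ := hQ
  choose anti hanti using hsurj
  -- the dressing operator S
  set FS : ℤ → (ℤ → A) → A := fun N g =>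
    anti (-∑ i ∈ Finset.Icc (N + 1) 0, ∑ j ∈ Finset.Icc (N - i) (-1),
      (Ring.choose j (j + i - N).toNat : ℤ) • (Q.1 j * d^[(j + i - N).toNat] (g i))) with hFSdef
  have hFS : ∀ (N : ℤ) (g g' : ℤ → A), (∀ i, N < i → g i = g' i) → FS N g = FS N g' := by
    intro N g g' hgg
    simp only [hFSdef]
    congr 2
    apply Finset.sum_congr rfl
    intro i hi
    simp only [Finset.mem_Icc] at hi
    apply Finset.sum_congr rfl
    intro j _
    rw [hgg i (by omega)]
  set Sf : ℤ → A := solveFn FS with hSfdef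
  have hSf0 : Sf 0 = 1 := solveFn_zero FS
  have hSfpos : ∀ i > (0 : ℤ), Sf i = 0 := solveFn_pos FS
  have hdS : ∀ N < 0, d (Sf N) = -∑ i ∈ Finset.Icc (N + 1) 0, ∑ j ∈ Finset.Icc (N - i) (-1),
      (Ring.choose j (j + i - N).toNat : ℤ) • (Q.1 j * d^[(j + i - N).toNat] (Sf i)) := by
    intro N hN
    rw [show Sf N = FS N Sf from solveFn_neg FS hFS N hN]
    simp only [hFSdef]
    rw [hanti]
  set S : PDO A := ⟨Sf, 0, fun i hi => hSfpos i hi⟩ with hSdef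
  have hSv : ∀ i > (0 : ℤ), S.1 i = 0 := hSfpos
  -- right inverse T
  set FT : ℤ → (ℤ → A) → A := fun N g =>
    -∑ j ∈ Finset.Icc (N + 1) 0, ∑ i ∈ Finset.Icc (N - j) 0,
      (Ring.choose i (i + j - N).toNat : ℤ) • (Sf i * d^[(i + j - N).toNat] (g j)) with hFTdef
  have hFT : ∀ (N : ℤ) (g g' : ℤ → A), (∀ i, N < i → g i = g' i) → FT N g = FT N g' := by
    intro N g g' hgg
    simp only [hFTdef]
    congr 1
    apply Finset.sum_congr rfl
    intro j hj
    simp only [Finset.mem_Icc] at hj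
    apply Finset.sum_congr rfl
    intro i _
    rw [hgg j (by omega)]
  set Tf : ℤ → A := solveFn FT with hTfdef
  have hTf0 : Tf 0 = 1 := solveFn_zero FT
  have hTfpos : ∀ i > (0 : ℤ), Tf i = 0 := solveFn_pos FT
  have hTrec : ∀ N < 0, Tf N = -∑ j ∈ Finset.Icc (N + 1) 0, ∑ i ∈ Finset.Icc (N - j) 0,
      (Ring.choose i (i + j - N).toNat : ℤ) • (Sf i * d^[(i + j - N).toNat] (Tf j)) := by
    intro N hN
    rw [show Tf N = FT N Tf from solveFn_neg FT hFT N hN]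
  set T : PDO A := ⟨Tf, 0, fun i hi => hTfpos i hi⟩ with hTdef
  have hTv : ∀ i > (0 : ℤ), T.1 i = 0 := hTfpos
  -- left inverse U
  set FU : ℤ → (ℤ → A) → A := fun N g =>
    -∑ i ∈ Finset.Icc (N + 1) 0, ∑ j ∈ Finset.Icc (N - i) 0,
      (Ring.choose i (i + j - N).toNat : ℤ) • (g i * d^[(i + j - N).toNat] (Sf j)) with hFUdef
  have hFU : ∀ (N : ℤ) (g g' : ℤ → A), (∀ i, N < i → g i = g' i) → FU N g = FU N g' := by
    intro N g g' hgg
    simp only [hFUdef]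
    congr 1
    apply Finset.sum_congr rfl
    intro i hi
    simp only [Finset.mem_Icc] at hi
    apply Finset.sum_congr rfl
    intro j _
    rw [hgg i (by omega)]
  set Uf : ℤ → A := solveFn FU with hUfdef
  have hUf0 : Uf 0 = 1 := solveFn_zero FU
  have hUfpos : ∀ i > (0 : ℤ), Uf i = 0 := solveFn_pos FU
  have hUrec : ∀ N < 0, Uf N = -∑ i ∈ Finset.Icc (N + 1) 0, ∑ j ∈ Finset.Icc (N - i) 0,
      (Ring.choose i (i + j - N).toNat : ℤ) • (Uf i * d^[(i + j - N).toNat] (Sf j)) := by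
    intro N hN
    rw [show Uf N = FU N Uf from solveFn_neg FU hFU N hN]
  set U : PDO A := ⟨Uf, 0, fun i hi => hUfpos i hi⟩ with hUdef
  have hUv : ∀ i > (0 : ℤ), U.1 i = 0 := hUfpos
  -- the key identities
  have hST : pdoMul d S T = pdoOne A := by
    apply pdo_ext
    intro N
    rw [pdoMul_coeff d hadd hSv hTv N]
    exact compute_right_inv d hSf0 hTf0 hTrec N
  have hUS : pdoMul d U S = pdoOne A := by
    apply pdo_ext
    intro N
    rw [pdoMul_coeff d hadd hUv hSv N]
    exact compute_left_inv d hSf0 hUf0 hUrec N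
  have hSdelQS : pdoMul d S (pdoDel A) = pdoMul d Q S := by
    apply pdo_ext
    intro N
    rw [pdoMul_coeff d hadd hSv pdoDel_vanish N, cm_del_right d hadd hleib hSv N,
      pdoMul_coeff d hadd hQv hSv N]
    exact (compute_conj d hadd hleib hQ1 hQ0 hSf0 hSfpos hdS N).symm
  have hUT : U = T := by
    have h1 := pdo_assoc d hadd hleib U S T
    rw [hUS, hST, pdoMul_one d hadd hleib, pdoOne_mul d hadd hleib] at h1
    exact h1.symm
  have hTS : pdoMul d T S = pdoOne A := by
    rw [← hUT]
    exact hUS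
  refine ⟨S, T, ⟨hSf0, hSfpos⟩, ⟨hTf0, hTfpos⟩, hST, hTS, ?_⟩
  rw [hSdelQS, pdo_assoc d hadd hleib Q S T, hST, pdoMul_one d hadd hleib]
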